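/- (Comparison principle) Let f, g : ℝⁿ → ℝⁿ be continuously differentiable vector fields and suppose the ODEs ẋ = f(x) and ẋ = g(x) have unique, globally defined solutions, giving flow maps φ_f, φ_g : [0,∞) × ℝⁿ → ℝⁿ with φ_f(0,x) = x, ∂_t φ_f(t,x) = f(φ_f(t,x)) and likewise for g. Assume f(x) ⪯ g(x) for all x ∈ ℝⁿ, and assume at least one of the two flows is monotone (x ⪯ y implies φ(t,x) ⪯ φ(t,y) for all t ≥ 0). Then for all initial conditions x₁ ⪯ x₂ and all t ≥ 0, one has φ_f(t,x₁) ⪯ φ_g(t,x₂). -/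

import Mathlib

open Filter Topology Set

lemma typeK_of_monotone {n : ℕ} (h : (Fin n → ℝ) → (Fin n → ℝ))
    (φ : ℝ → (Fin n → ℝ) → (Fin n → ℝ))
    (hφ0 : ∀ x, φ 0 x = x)
    (hφ : ∀ x, ∀ t ≥ (0 : ℝ), HasDerivAt (fun s => φ s x) (h (φ t x)) t)
    (hmono : ∀ t ≥ (0 : ℝ), ∀ x y : Fin n → ℝ, x ≤ y → φ t x ≤ φ t y) :
    ∀ x y : Fin n → ℝ, x ≤ y → ∀ i, x i = y i → h x i ≤ h y i := by
  intro x y hxy i hi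
  set u : ℝ → ℝ := fun t => φ t y i - φ t x i with hu
  have hdx : HasDerivAt (fun s => φ s x i) (h x i) 0 := by
    have := ((ContinuousLinearMap.proj (R := ℝ) (φ := fun _ : Fin n => ℝ) i).hasFDerivAt.comp_hasDerivAt
      0 (hφ x 0 le_rfl))
    simpa [hφ0, Function.comp_def] using this
  have hdy : HasDerivAt (fun s => φ s y i) (h y i) 0 := by
    have := ((ContinuousLinearMap.proj (R := ℝ) (φ := fun _ : Fin n => ℝ) i).hasFDerivAt.comp_hasDerivAt
      0 (hφ y 0 le_rfl))
    simpa [hφ0, Function.comp_def] using this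
  have hdu : HasDerivAt u (h y i - h x i) 0 := hdy.sub hdx
  have hu0 : u 0 = 0 := by simp [hu, hφ0, hi]
  have hslope : Tendsto (slope u 0) (𝓝[>] 0) (𝓝 (h y i - h x i)) :=
    (hasDerivAt_iff_tendsto_slope.mp hdu).mono_left
      (nhdsWithin_mono _ (fun t ht => ne_of_gt ht))
  have hpos : ∀ᶠ t in 𝓝[>] (0:ℝ), 0 ≤ slope u 0 t := by
    filter_upwards [self_mem_nhdsWithin] with t ht
    have hut : 0 ≤ u t := sub_nonneg.mpr (hmono t (le_of_lt ht) x y hxy i)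
    have hts : slope u 0 t = t⁻¹ * u t := by simp [slope, hu0]
    rw [hts]
    have ht' : (0:ℝ) < t := ht
    positivity
  have hge : 0 ≤ h y i - h x i := ge_of_tendsto hslope hpos
  linarith


set_option maxHeartbeats 1000000 in
lemma kamke {n : ℕ} (h : (Fin n → ℝ) → (Fin n → ℝ)) (hh : ContDiff ℝ 1 h)
    (hK : ∀ x y : Fin n → ℝ, x ≤ y → ∀ i, x i = y i → h x i ≤ h y i)
    (a b va vb : ℝ → Fin n → ℝ)
    (ha : ∀ t ≥ (0:ℝ), HasDerivAt a (va t) t) (hva : ∀ t ≥ (0:ℝ), va t ≤ h (a t))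
    (hb : ∀ t ≥ (0:ℝ), HasDerivAt b (vb t) t) (hvb : ∀ t ≥ (0:ℝ), h (b t) ≤ vb t)
    (hab : a 0 ≤ b 0) : ∀ t ≥ (0:ℝ), a t ≤ b t := by
  intro T hT
  -- continuity on [0,T]
  have ca : ContinuousOn a (Icc 0 T) := fun t ht => (ha t ht.1).continuousAt.continuousWithinAt
  have cb : ContinuousOn b (Icc 0 T) := fun t ht => (hb t ht.1).continuousAt.continuousWithinAt
  -- bound on the trajectories
  obtain ⟨R0, hR0⟩ := (((isCompact_Icc.image_of_continuousOn ca).union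
    (isCompact_Icc.image_of_continuousOn cb)).isBounded).subset_closedBall 0
  set R : ℝ := max R0 0 with hR
  have haR : ∀ t ∈ Icc (0:ℝ) T, ‖a t‖ ≤ R := by
    intro t ht
    have := hR0 (Or.inl ⟨t, ht, rfl⟩)
    simp only [Metric.mem_closedBall, dist_zero_right] at this
    exact this.trans (le_max_left _ _)
  have hbR : ∀ t ∈ Icc (0:ℝ) T, ‖b t‖ ≤ R := by
    intro t ht
    have := hR0 (Or.inr ⟨t, ht, rfl⟩)
    simp only [Metric.mem_closedBall, dist_zero_right] at this
    exact this.trans (le_max_left _ _)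
  -- Lipschitz constant on S = closedBall 0 (R+1)
  set S : Set (Fin n → ℝ) := Metric.closedBall 0 (R + 1) with hS
  obtain ⟨C0, hC0⟩ := (isCompact_closedBall (0 : Fin n → ℝ) (R + 1)).exists_bound_of_continuousOn
    ((hh.continuous_fderiv one_ne_zero).continuousOn (s := S))
  have hlip : LipschitzOnWith (Real.toNNReal C0) h S :=
    (convex_closedBall 0 (R+1)).lipschitzOnWith_of_nnnorm_fderiv_le
      (fun x _ => hh.differentiable one_ne_zero x)
      (fun x hx => by
        have h0 : (0:ℝ) ≤ C0 := (norm_nonneg _).trans (hC0 x hx)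
        rw [Real.le_toNNReal_iff_coe_le h0]
        exact (coe_nnnorm _).le.trans (hC0 x hx))
  set C : ℝ := (Real.toNNReal C0 : ℝ) with hC
  have hCnn : 0 ≤ C := (Real.toNNReal C0).coe_nonneg
  set L : ℝ := C + 1 with hL
  have hLpos : 0 < L := by linarith
  -- the key claim with exponential perturbation
  have claim : ∀ ε : ℝ, 0 < ε → ε * Real.exp (L * T) ≤ 1 →
      ∀ t ∈ Icc (0:ℝ) T, ∀ i, a t i ≤ b t i + ε * Real.exp (L * t) := by
    intro ε hε hε1
    by_contra hcon
    push_neg at hcon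
    set w : Fin n → ℝ → ℝ := fun j t => a t j - b t j - ε * Real.exp (L * t) with hw
    set B : Set ℝ := ⋃ j, (Icc (0:ℝ) T ∩ (w j)⁻¹' Ici 0) with hB
    have hBmem : ∀ t : ℝ, t ∈ B ↔ ∃ j, t ∈ Icc (0:ℝ) T ∧ 0 ≤ w j t := by
      intro t
      rw [hB, mem_iUnion]
      simp only [Set.mem_inter_iff, Set.mem_preimage, Set.mem_Ici]
    have hBsub : B ⊆ Icc 0 T := by
      intro t ht; obtain ⟨j, hj, _⟩ := (hBmem t).mp ht; exact hj
    have hBne : B.Nonempty := by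
      obtain ⟨t, ht, i, hi⟩ := hcon
      refine ⟨t, (hBmem t).mpr ⟨i, ht, ?_⟩⟩
      simp only [hw]; linarith
    have hwcont : ∀ j, ContinuousOn (w j) (Icc 0 T) := by
      intro j
      have h1 : ContinuousOn (fun t => a t j) (Icc 0 T) :=
        (continuous_apply j).comp_continuousOn ca
      have h2 : ContinuousOn (fun t => b t j) (Icc 0 T) :=
        (continuous_apply j).comp_continuousOn cb
      exact (h1.sub h2).sub (Continuous.continuousOn (by continuity))
    have hBclosed : IsClosed B := by
      rw [hB]
      exact isClosed_iUnion_of_finite (fun j =>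
        (hwcont j).preimage_isClosed_of_isClosed isClosed_Icc isClosed_Ici)
    set t₀ : ℝ := sInf B with ht₀def
    have ht₀B : t₀ ∈ B := hBclosed.csInf_mem hBne ⟨0, fun t ht => (hBsub ht).1⟩
    have ht₀Icc : t₀ ∈ Icc (0:ℝ) T := hBsub ht₀B
    have h0notB : (0:ℝ) ∉ B := by
      rw [hBmem 0]; push_neg
      intro j _
      simp only [hw, mul_zero, Real.exp_zero, mul_one]
      have := hab j
      linarith
    have ht₀pos : 0 < t₀ := lt_of_le_of_ne ht₀Icc.1 (fun e => h0notB (e ▸ ht₀B))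
    have hbefore : ∀ t ∈ Ico (0:ℝ) t₀, ∀ j, w j t < 0 := by
      intro t ht j
      by_contra hle
      push_neg at hle
      have htB : t ∈ B := (hBmem t).mpr ⟨j, ⟨ht.1, ht.2.le.trans ht₀Icc.2⟩, hle⟩
      exact absurd (csInf_le ⟨0, fun s hs => (hBsub hs).1⟩ htB) (not_le.mpr ht.2)
    have hwle : ∀ j, w j t₀ ≤ 0 := by
      intro j
      have hcontj : ContinuousAt (w j) t₀ := by
        have h1 : ContinuousAt (fun t => a t j) t₀ :=
          (continuous_apply j).continuousAt.comp (ha t₀ ht₀Icc.1).continuousAt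
        have h2 : ContinuousAt (fun t => b t j) t₀ :=
          (continuous_apply j).continuousAt.comp (hb t₀ ht₀Icc.1).continuousAt
        have h3 : ContinuousAt (fun t => ε * Real.exp (L * t)) t₀ := by fun_prop
        exact (h1.sub h2).sub h3
      refine le_of_tendsto (hcontj.tendsto.mono_left (nhdsWithin_le_nhds (s := Iio t₀))) ?_
      filter_upwards [Ioo_mem_nhdsLT_of_mem ⟨ht₀pos, le_rfl⟩] with t ht
      exact (hbefore t ⟨ht.1.le, ht.2⟩ j).le
    obtain ⟨i, -, hwi⟩ := (hBmem t₀).mp ht₀B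
    have hwi0 : w i t₀ = 0 := le_antisymm (hwle i) hwi
    -- derivatives
    have hexp : HasDerivAt (fun t => ε * Real.exp (L * t)) (ε * (Real.exp (L * t₀) * L)) t₀ := by
      have h1 : HasDerivAt (fun t : ℝ => L * t) L t₀ := by
        simpa using (hasDerivAt_id t₀).const_mul L
      exact ((Real.hasDerivAt_exp (L * t₀)).comp t₀ h1).const_mul ε
    have hai : HasDerivAt (fun t => a t i) (va t₀ i) t₀ :=
      (ContinuousLinearMap.proj (R := ℝ) (φ := fun _ : Fin n => ℝ) i).hasFDerivAt.comp_hasDerivAt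
        t₀ (ha t₀ ht₀Icc.1)
    have hbi : HasDerivAt (fun t => b t i) (vb t₀ i) t₀ :=
      (ContinuousLinearMap.proj (R := ℝ) (φ := fun _ : Fin n => ℝ) i).hasFDerivAt.comp_hasDerivAt
        t₀ (hb t₀ ht₀Icc.1)
    set d : ℝ := va t₀ i - vb t₀ i - ε * (Real.exp (L * t₀) * L) with hd_def
    have hwd : HasDerivAt (w i) d t₀ := (hai.sub hbi).sub hexp
    -- bound d < 0
    set E : ℝ := ε * Real.exp (L * t₀) with hE
    have hEpos : 0 < E := by positivity
    have hE1 : E ≤ 1 := by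
      have : Real.exp (L * t₀) ≤ Real.exp (L * T) :=
        Real.exp_le_exp.mpr (mul_le_mul_of_nonneg_left ht₀Icc.2 hLpos.le)
      calc E ≤ ε * Real.exp (L * T) := by
              exact mul_le_mul_of_nonneg_left this hε.le
        _ ≤ 1 := hε1
    have hRnn : (0:ℝ) ≤ R := le_max_right _ _
    have hbmem : b t₀ ∈ S := by
      rw [hS, Metric.mem_closedBall, dist_zero_right]
      linarith [hbR t₀ ht₀Icc]
    set y : Fin n → ℝ := fun j => b t₀ j + E with hy
    have hymem : y ∈ S := by
      rw [hS, Metric.mem_closedBall, dist_zero_right]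
      rw [pi_norm_le_iff_of_nonneg (by linarith : (0:ℝ) ≤ R + 1)]
      intro j
      have h1 : |b t₀ j| ≤ ‖b t₀‖ := by
        simpa [Real.norm_eq_abs] using norm_le_pi_norm (b t₀) j
      have h2 := hbR t₀ ht₀Icc
      simp only [hy, Real.norm_eq_abs]
      have := abs_add_le (b t₀ j) E
      rw [abs_of_pos hEpos] at this
      have h3 := abs_le.mp (le_trans (le_refl _) (le_refl (|b t₀ j|)))
      calc |b t₀ j + E| ≤ |b t₀ j| + E := this
        _ ≤ R + 1 := by linarith
    have haley : a t₀ ≤ y := by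
      intro j
      have := hwle j
      simp only [hw, hy] at this ⊢
      linarith
    have heqi : a t₀ i = y i := by
      simp only [hw] at hwi0
      simp only [hy]
      linarith
    have hK1 : h (a t₀) i ≤ h y i := hK _ _ haley i heqi
    have hlip1 : h y i - h (b t₀) i ≤ C * E := by
      have h1 : |h y i - h (b t₀) i| ≤ ‖h y - h (b t₀)‖ := by
        simpa [Real.norm_eq_abs] using norm_le_pi_norm (h y - h (b t₀)) i
      have h2 : dist (h y) (h (b t₀)) ≤ C * dist y (b t₀) := hlip.dist_le_mul y hymem (b t₀) hbmem
      have h3 : dist y (b t₀) ≤ E := by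
        rw [dist_pi_le_iff hEpos.le]
        intro j
        simp only [hy, Real.dist_eq]
        simp [abs_of_pos hEpos]
      rw [dist_eq_norm] at h2
      have h4 : ‖h y - h (b t₀)‖ ≤ C * E := h2.trans (by nlinarith)
      have h5 := (abs_le.mp (h1.trans h4)).2
      linarith
    have hdneg : d < 0 := by
      have h4 := hva t₀ ht₀Icc.1 i
      have h5 := hvb t₀ ht₀Icc.1 i
      have h6 : ε * (Real.exp (L * t₀) * L) = L * E := by rw [hE]; ring
      rw [hd_def, h6, hL]
      have : h (a t₀) i ≤ h (b t₀) i + C * E := by linarith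
      nlinarith
    -- contradiction via slope from the left
    have hslope : Tendsto (slope (w i) t₀) (𝓝[<] t₀) (𝓝 d) :=
      (hasDerivAt_iff_tendsto_slope.mp hwd).mono_left
        (nhdsWithin_mono _ (fun t ht => ne_of_lt ht))
    have hev : ∀ᶠ t in 𝓝[<] t₀, 0 ≤ slope (w i) t₀ t := by
      filter_upwards [Ioo_mem_nhdsLT_of_mem ⟨ht₀pos, le_rfl⟩] with t ht
      have hwt : w i t < 0 := hbefore t ⟨ht.1.le, ht.2⟩ i
      have hs : slope (w i) t₀ t = (w i t - w i t₀) / (t - t₀) := slope_def_field _ _ _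
      rw [hs, hwi0, sub_zero]
      exact (div_pos_of_neg_of_neg hwt (by linarith [ht.2])).le
    have : (0:ℝ) ≤ d := ge_of_tendsto hslope hev
    linarith
  -- conclude by letting ε → 0
  intro i
  refine le_of_forall_pos_le_add (fun η hη => ?_)
  have hexpT : 0 < Real.exp (L * T) := Real.exp_pos _
  set ε : ℝ := min (η / Real.exp (L * T)) (1 / Real.exp (L * T)) with hεdef
  have hε : 0 < ε := lt_min (by positivity) (by positivity)
  have hε1 : ε * Real.exp (L * T) ≤ 1 := by
    rw [← le_div_iff₀ hexpT]
    exact min_le_right _ _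
  have hεη : ε * Real.exp (L * T) ≤ η := by
    rw [← le_div_iff₀ hexpT]
    exact min_le_left _ _
  have := claim ε hε hε1 T ⟨hT, le_rfl⟩ i
  linarith


/-- Comparison principle: Let `f, g : ℝⁿ → ℝⁿ` be `C¹` vector fields whose
ODEs have unique globally defined solutions, with flow maps `φf`, `φg` (i.e. `φ 0 x = x` and
`∂ₜ φ t x = f (φ t x)` for `t ≥ 0`, and any solution of the ODE coincides with the flow).
If `f x ⪯ g x` for all `x` and at least one of the two flows is monotone, then
`φf t x₁ ⪯ φg t x₂` for all `t ≥ 0` whenever `x₁ ⪯ x₂`. -/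
theorem comparison_principle {n : ℕ}
    (f g : (Fin n → ℝ) → (Fin n → ℝ))
    (hf : ContDiff ℝ 1 f) (hg : ContDiff ℝ 1 g)
    (φf φg : ℝ → (Fin n → ℝ) → (Fin n → ℝ))
    (hφf0 : ∀ x, φf 0 x = x)
    (hφf : ∀ x, ∀ t ≥ (0 : ℝ), HasDerivAt (fun s => φf s x) (f (φf t x)) t)
    (hφfuniq : ∀ (x : Fin n → ℝ) (ψ : ℝ → (Fin n → ℝ)), ψ 0 = x →
      (∀ t ≥ (0 : ℝ), HasDerivAt ψ (f (ψ t)) t) → ∀ t ≥ (0 : ℝ), ψ t = φf t x)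
    (hφg0 : ∀ x, φg 0 x = x)
    (hφg : ∀ x, ∀ t ≥ (0 : ℝ), HasDerivAt (fun s => φg s x) (g (φg t x)) t)
    (hφguniq : ∀ (x : Fin n → ℝ) (ψ : ℝ → (Fin n → ℝ)), ψ 0 = x →
      (∀ t ≥ (0 : ℝ), HasDerivAt ψ (g (ψ t)) t) → ∀ t ≥ (0 : ℝ), ψ t = φg t x)
    (hfg : ∀ x, f x ≤ g x)
    (hmono : (∀ t ≥ (0 : ℝ), ∀ x y : Fin n → ℝ, x ≤ y → φf t x ≤ φf t y) ∨
             (∀ t ≥ (0 : ℝ), ∀ x y : Fin n → ℝ, x ≤ y → φg t x ≤ φg t y))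
    (x₁ x₂ : Fin n → ℝ) (hx : x₁ ≤ x₂) :
    ∀ t ≥ (0 : ℝ), φf t x₁ ≤ φg t x₂ := by
  
  intro t ht
  rcases hmono with hm | hm
  · have hKf := typeK_of_monotone f φf hφf0 hφf hm
    exact kamke f hf hKf (fun s => φf s x₁) (fun s => φg s x₂)
      (fun s => f (φf s x₁)) (fun s => g (φg s x₂))
      (fun s hs => hφf x₁ s hs) (fun s _ => le_rfl)
      (fun s hs => hφg x₂ s hs) (fun s _ => hfg _)
      (by simpa only [hφf0, hφg0] using hx) t ht
  · have hKg := typeK_of_monotone g φg hφg0 hφg hm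
    exact kamke g hg hKg (fun s => φf s x₁) (fun s => φg s x₂)
      (fun s => f (φf s x₁)) (fun s => g (φg s x₂))
      (fun s hs => hφf x₁ s hs) (fun s _ => hfg _)
      (fun s hs => hφg x₂ s hs) (fun s _ => le_rfl)
      (by simpa only [hφf0, hφg0] using hx) t ht
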